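/- Let n ≥ 3 be odd, let a, b, c ∈ ℤ with abc ≠ 0, and suppose there exists a polynomial R ∈ ℤ[x] of degree n with Res(R, ax² + bx + c) = 1. Then the conic X² − (b² − 4ac)Y² = cZ² has a nontrivial rational point, i.e. there exist X, Y, Z ∈ ℚ, not all zero, satisfying the equation with Z ≠ 0. -/

import Mathlib

open Polynomial

/-- The Sylvester-style matrix of `f` (viewed as having degree `m`) and `g` (viewed as having
degree `n`): the first `n` columns are the shifted coefficient columns of `f` and the remaining
`m` columns are the shifted coefficient columns of `g`. -/
noncomputable def sylvester {R : Type*} [CommRing R] (f g : R[X]) (m n : ℕ) :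
    Matrix (Fin (m + n)) (Fin (m + n)) R :=
  Matrix.of fun i j =>
    if (j : ℕ) < n then
      (if (j : ℕ) ≤ (i : ℕ) ∧ (i : ℕ) - (j : ℕ) ≤ m then
        f.coeff (m - ((i : ℕ) - (j : ℕ))) else 0)
    else
      (if (j : ℕ) - n ≤ (i : ℕ) ∧ (i : ℕ) - ((j : ℕ) - n) ≤ n then
        g.coeff (n - ((i : ℕ) - ((j : ℕ) - n))) else 0)

/-- The resultant of `f` (of degree `m`) and `g` (of degree `n`), as the determinant of the
Sylvester matrix. -/
noncomputable def res {R : Type*} [CommRing R] (f g : R[X]) (m n : ℕ) : R :=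
  (_root_.sylvester f g m n).det

lemma qcoeff {A : Type*} [CommRing A] (a b c : A) (i : ℕ) :
    (C a * X ^ 2 + C b * X + C c).coeff i =
      if i = 0 then c else if i = 1 then b else if i = 2 then a else 0 := by
  rcases i with _ | _ | _ | i <;>
    simp [coeff_add, coeff_C_mul, coeff_X_pow, coeff_C, coeff_X]

noncomputable def qm (a b c : ℚ) : ℚ[X] := X ^ 2 + (C (b / a) * X + C (c / a))

lemma qm_lin (a b c : ℚ) : degree (C (b / a) * X + C (c / a)) < 2 :=
  lt_of_le_of_lt degree_linear_le (by norm_num)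

lemma qm_monic (a b c : ℚ) : (qm a b c).Monic :=
  monic_X_pow_add (qm_lin a b c)

lemma qm_degree (a b c : ℚ) : (qm a b c).degree = 2 := by
  unfold qm
  rw [degree_add_eq_left_of_degree_lt (by rw [degree_X_pow]; exact qm_lin a b c), degree_X_pow]
  rfl

lemma Cq (a b c : ℚ) (ha : a ≠ 0) :
    C a * qm a b c = C a * X ^ 2 + C b * X + C c := by
  unfold qm
  rw [mul_add, mul_add, ← mul_assoc, ← C_mul, ← C_mul,
    mul_div_cancel₀ _ ha, mul_div_cancel₀ _ ha, add_assoc]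

lemma mod_self (a b c : ℚ) (f : ℚ[X]) (hf : f.natDegree ≤ 1) : f %ₘ qm a b c = f := by
  rw [modByMonic_eq_self_iff (qm_monic a b c), qm_degree]
  exact lt_of_le_of_lt (degree_le_of_natDegree_le hf) (by norm_num)

noncomputable def nrm (a b c : ℚ) (f : ℚ[X]) : ℚ :=
  a * ((f %ₘ qm a b c).coeff 0) ^ 2 - b * ((f %ₘ qm a b c).coeff 0) * ((f %ₘ qm a b c).coeff 1)
    + c * ((f %ₘ qm a b c).coeff 1) ^ 2

lemma expand (a b c : ℚ) (m : ℕ) (g : ℚ[X]) (hg : g.natDegree ≤ m + 1) :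
    (_root_.sylvester g (C a * X ^ 2 + C b * X + C c) (m + 1 + 1) 2).det
      = a * (_root_.sylvester g (C a * X ^ 2 + C b * X + C c) (m + 1) 2).det := by
  set Q : ℚ[X] := C a * X ^ 2 + C b * X + C c with hQ
  have hrow : ∀ j : Fin (m + 4),
      (_root_.sylvester g Q (m + 1 + 1) 2) 0 j = if (j : ℕ) = 2 then a else 0 := by
    intro j
    simp only [_root_.sylvester, Matrix.of_apply]
    rw [show ((0 : Fin (m + 4)) : ℕ) = 0 from rfl]
    rcases Nat.lt_or_ge (j : ℕ) 2 with h | h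
    · rw [if_pos h, if_neg (show ¬(j : ℕ) = 2 by omega)]
      split_ifs with h1
      · have e : m + 1 + 1 - (0 - (j : ℕ)) = m + 2 := by omega
        rw [e]
        exact coeff_eq_zero_of_natDegree_lt (by omega)
      · rfl
    · rw [if_neg (by omega)]
      by_cases h2 : (j : ℕ) = 2
      · rw [if_pos h2, if_pos (by omega : (j:ℕ) - 2 ≤ 0 ∧ 0 - ((j:ℕ) - 2) ≤ 2)]
        have e : 2 - (0 - ((j : ℕ) - 2)) = 2 := by omega
        rw [e, hQ, qcoeff]
        norm_num
      · rw [if_neg h2, if_neg (by omega)]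
  have hsub : (_root_.sylvester g Q (m + 1 + 1) 2).submatrix Fin.succ
      (Fin.succAbove ⟨2, by omega⟩) = _root_.sylvester g Q (m + 1) 2 := by
    ext i j
    have hv : (((⟨2, by omega⟩ : Fin (m + 4)).succAbove j : ℕ))
        = if (j : ℕ) < 2 then (j : ℕ) else (j : ℕ) + 1 := by
      rcases Nat.lt_or_ge (j : ℕ) 2 with h | h
      · rw [if_pos h, Fin.succAbove_of_castSucc_lt, Fin.coe_castSucc]
        simp [Fin.lt_def, h]
      · rw [if_neg (by omega), Fin.succAbove_of_le_castSucc, Fin.val_succ]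
        simp [Fin.le_def, h]
    simp only [Matrix.submatrix_apply, _root_.sylvester, Matrix.of_apply, Fin.val_succ, hv]
    rcases Nat.lt_or_ge (j : ℕ) 2 with h | h
    · simp only [if_pos h]
      by_cases hji : (j : ℕ) ≤ (i : ℕ)
      · by_cases hle : (i : ℕ) - (j : ℕ) ≤ m + 1
        · rw [if_pos (by omega : (j:ℕ) ≤ (i:ℕ)+1 ∧ (i:ℕ)+1-(j:ℕ) ≤ m+1+1),
            if_pos ⟨hji, hle⟩]
          congr 1
          omega
        · rw [if_neg (by omega), if_neg (by omega)]
      · rw [if_pos (by omega : (j:ℕ) ≤ (i:ℕ)+1 ∧ (i:ℕ)+1-(j:ℕ) ≤ m+1+1),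
          if_neg (by omega)]
        have e : m + 1 + 1 - ((i : ℕ) + 1 - (j : ℕ)) = m + 2 := by omega
        rw [e]
        exact coeff_eq_zero_of_natDegree_lt (by omega)
    · simp only [if_neg (show ¬(j : ℕ) < 2 by omega),
        if_neg (show ¬(j : ℕ) + 1 < 2 by omega)]
      by_cases hc : (j : ℕ) - 2 ≤ (i : ℕ) ∧ (i : ℕ) - ((j : ℕ) - 2) ≤ 2
      · rw [if_pos (by omega), if_pos hc]
        congr 1
        omega
      · rw [if_neg (by omega), if_neg hc]
  rw [Matrix.det_succ_row_zero, Finset.sum_eq_single (⟨2, by omega⟩ : Fin (m + 4))]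
  · rw [hrow, hsub]
    norm_num
  · intro j _ hj
    rw [hrow]
    have : ¬ ((j : ℕ) = 2) := fun h => hj (Fin.ext h)
    rw [if_neg this, mul_zero, zero_mul]
  · intro h
    exact absurd (Finset.mem_univ _) h

lemma colstep (a b c : ℚ) (m : ℕ) (f : ℚ[X]) :
    (_root_.sylvester f (C a * X ^ 2 + C b * X + C c) (m + 1 + 1) 2).det
      = (_root_.sylvester (f - C (f.coeff (m + 2) / a) * ((C a * X ^ 2 + C b * X + C c) * X ^ m))
          (C a * X ^ 2 + C b * X + C c) (m + 1 + 1) 2).det := by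
  set Q : ℚ[X] := C a * X ^ 2 + C b * X + C c with hQ
  set s : ℚ := f.coeff (m + 2) with hs
  set f' : ℚ[X] := f - C (s / a) * (Q * X ^ m) with hf'
  set M : Matrix (Fin (m + 4)) (Fin (m + 4)) ℚ := _root_.sylvester f Q (m + 1 + 1) 2 with hM
  set c0 : Fin (m + 4) := ⟨0, by omega⟩
  set c1 : Fin (m + 4) := ⟨1, by omega⟩
  set c2 : Fin (m + 4) := ⟨2, by omega⟩
  set c3 : Fin (m + 4) := ⟨3, by omega⟩
  have v0 : (c0 : ℕ) = 0 := rfl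
  have v1 : (c1 : ℕ) = 1 := rfl
  have v2 : (c2 : ℕ) = 2 := rfl
  have v3 : (c3 : ℕ) = 3 := rfl
  set r : ℚ := -(s / a) with hr
  set M1 : Matrix (Fin (m + 4)) (Fin (m + 4)) ℚ :=
    M.updateCol c0 (fun k => M k c0 + r • M k c2) with hM1
  set M2 : Matrix (Fin (m + 4)) (Fin (m + 4)) ℚ :=
    M1.updateCol c1 (fun k => M1 k c1 + r • M1 k c3) with hM2
  have h1 : M1.det = M.det :=
    Matrix.det_updateCol_add_smul_self M (i := c0) (j := c2) (Fin.ne_of_val_ne (by norm_num)) r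
  have h2 : M2.det = M1.det :=
    Matrix.det_updateCol_add_smul_self M1 (i := c1) (j := c3) (Fin.ne_of_val_ne (by norm_num)) r
  have key : M2 = _root_.sylvester f' Q (m + 1 + 1) 2 := by
    ext i j
    have hfc : ∀ k : ℕ, f'.coeff k
        = f.coeff k - s / a * (if m ≤ k then Q.coeff (k - m) else 0) := by
      intro k
      rw [hf', coeff_sub, mul_comm (C (s/a)) _, coeff_mul_C, coeff_mul_X_pow']
      ring
    rcases Nat.lt_or_ge (j : ℕ) 2 with hj | hj
    · rcases Nat.lt_or_ge (j : ℕ) 1 with hj0 | hj1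
      · -- j = c0
        have hjc : j = c0 := Fin.ext (by omega)
        subst hjc
        rw [hM2, Matrix.updateCol_apply, if_neg (Fin.ne_of_val_ne (by norm_num)),
          hM1, Matrix.updateCol_apply, if_pos rfl]
        simp only [hM, _root_.sylvester, Matrix.of_apply, smul_eq_mul, v0, v2]
        norm_num only
        simp only [if_true, if_false, Nat.sub_zero, Nat.zero_le, true_and]
        by_cases hi2 : (i : ℕ) ≤ 2
        · rw [if_pos (show (i:ℕ) ≤ m + 1 + 1 by omega),
            if_pos (show (i:ℕ) ≤ m + 1 + 1 by omega), if_pos hi2, hfc,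
            if_pos (show m ≤ m + 1 + 1 - (i:ℕ) by omega),
            show m + 1 + 1 - (i:ℕ) - m = 2 - (i:ℕ) by omega, hr]
          ring
        · rw [if_neg hi2, mul_zero, add_zero]
          by_cases him : (i : ℕ) ≤ m + 1 + 1
          · rw [if_pos him, if_pos him, hfc,
              if_neg (show ¬ m ≤ m + 1 + 1 - (i:ℕ) by omega), mul_zero, sub_zero]
          · rw [if_neg him, if_neg him]
      · -- j = c1
        have hjc : j = c1 := Fin.ext (by omega)
        subst hjc
        rw [hM2, Matrix.updateCol_apply, if_pos rfl, hM1, Matrix.updateCol_apply,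
          if_neg (Fin.ne_of_val_ne (by norm_num)), Matrix.updateCol_apply,
          if_neg (Fin.ne_of_val_ne (by norm_num))]
        simp only [hM, _root_.sylvester, Matrix.of_apply, smul_eq_mul, v1, v3]
        norm_num only
        simp only [if_true, if_false]
        by_cases hi1 : 1 ≤ (i : ℕ)
        · by_cases hi2 : (i : ℕ) - 1 ≤ 2
          · rw [if_pos ⟨hi1, by omega⟩, if_pos ⟨hi1, hi2⟩, if_pos ⟨hi1, by omega⟩, hfc,
              if_pos (show m ≤ m + 1 + 1 - ((i:ℕ) - 1) by omega),
              show m + 1 + 1 - ((i:ℕ) - 1) - m = 2 - ((i:ℕ) - 1) by omega, hr]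
            ring
          · rw [if_neg (show ¬ (1 ≤ (i:ℕ) ∧ (i:ℕ) - 1 ≤ 2) by omega), mul_zero, add_zero]
            by_cases him : (i : ℕ) - 1 ≤ m + 1 + 1
            · rw [if_pos ⟨hi1, him⟩, if_pos ⟨hi1, him⟩, hfc,
                if_neg (show ¬ m ≤ m + 1 + 1 - ((i:ℕ) - 1) by omega), mul_zero, sub_zero]
            · rw [if_neg (show ¬ (1 ≤ (i:ℕ) ∧ (i:ℕ) - 1 ≤ m + 1 + 1) by omega),
                if_neg (show ¬ (1 ≤ (i:ℕ) ∧ (i:ℕ) - 1 ≤ m + 1 + 1) by omega)]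
        · rw [if_neg (show ¬ (1 ≤ (i:ℕ) ∧ (i:ℕ) - 1 ≤ m + 1 + 1) by omega),
            if_neg (show ¬ (1 ≤ (i:ℕ) ∧ (i:ℕ) - 1 ≤ m + 1 + 1) by omega),
            if_neg (show ¬ (1 ≤ (i:ℕ) ∧ (i:ℕ) - 1 ≤ 2) by omega)]
          ring
    · -- j untouched
      have hj0 : j ≠ c0 := Fin.ne_of_val_ne (by omega)
      have hj1 : j ≠ c1 := Fin.ne_of_val_ne (by omega)
      rw [hM2, Matrix.updateCol_apply, if_neg hj1, hM1, Matrix.updateCol_apply, if_neg hj0]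
      simp only [hM, _root_.sylvester, Matrix.of_apply]
      have hcond : ¬ ((j:ℕ) < 2) := by omega
      rw [if_neg hcond, if_neg hcond]
  rw [← h1, ← h2, key]


lemma key (a b c : ℚ) (ha : a ≠ 0) :
    ∀ m (f : ℚ[X]), f.natDegree ≤ m + 1 →
      (_root_.sylvester f (C a * X ^ 2 + C b * X + C c) (m + 1) 2).det = a ^ m * nrm a b c f := by
  intro m
  induction m with
  | zero =>
    intro f hf
    rw [Matrix.det_fin_three]
    simp only [_root_.sylvester, Matrix.of_apply, nrm, mod_self a b c f hf]
    norm_num [qcoeff]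
    ring
  | succ m ih =>
    intro f hf
    set s : ℚ := f.coeff (m + 2) with hs
    set f' : ℚ[X] := f - C (s / a) * ((C a * X ^ 2 + C b * X + C c) * X ^ m) with hf'def
    have hf'c : ∀ N, m + 1 < N → f'.coeff N = 0 := by
      intro N hN
      rw [hf'def, coeff_sub, coeff_C_mul, coeff_mul_X_pow', if_pos (by omega), qcoeff]
      rcases eq_or_lt_of_le (show m + 2 ≤ N by omega) with h | h
      · rw [← h, show m + 2 - m = 2 by omega]
        norm_num
        rw [div_mul_cancel₀ _ ha, ← hs, sub_self]
      · rw [coeff_eq_zero_of_natDegree_lt (lt_of_le_of_lt hf h),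
          if_neg (by omega), if_neg (by omega), if_neg (by omega)]
        ring
    have hf' : f'.natDegree ≤ m + 1 := natDegree_le_iff_coeff_eq_zero.2 hf'c
    have hmodeq : f' %ₘ qm a b c = f %ₘ qm a b c := by
      have hfact : C (s / a) * ((C a * X ^ 2 + C b * X + C c) * X ^ m)
          = qm a b c * (C s * X ^ m) := by
        rw [← Cq a b c ha,
          show C (s / a) * (C a * qm a b c * X ^ m)
            = (C (s / a) * C a) * (qm a b c * X ^ m) by ring,
          ← C_mul, div_mul_cancel₀ s ha]
        ring
      rw [hf'def, hfact, sub_modByMonic, self_mul_modByMonic (qm_monic a b c), sub_zero]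
    have hnrm : nrm a b c f' = nrm a b c f := by
      unfold nrm
      rw [hmodeq]
    rw [colstep a b c m f, ← hs, ← hf'def, expand a b c m f' hf', ih f' hf', hnrm]
    ring

/-- If `n ≥ 3` is odd, `abc ≠ 0`, and some integer polynomial `R` of degree `n` has resultant `1`
with `ax² + bx + c`, then the conic `X² - (b² - 4ac)Y² = cZ²` has a rational point with `Z ≠ 0`. -/
theorem conic_of_resultant_one (n : ℕ) (hn : 3 ≤ n) (hodd : Odd n)
    (a b c : ℤ) (habc : a * b * c ≠ 0)
    (hR : ∃ R : Polynomial ℤ, R.natDegree = n ∧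
      res R (C a * X ^ 2 + C b * X + C c) n 2 = 1) :
    ∃ x y z : ℚ, ¬(x = 0 ∧ y = 0 ∧ z = 0) ∧ z ≠ 0 ∧
      x ^ 2 - ((b ^ 2 - 4 * a * c : ℤ) : ℚ) * y ^ 2 = (c : ℚ) * z ^ 2 := by
  obtain ⟨R0, hdeg, hres⟩ := hR
  have ha0 : a ≠ 0 := by rintro rfl; simp at habc
  have ha : (a : ℚ) ≠ 0 := Int.cast_ne_zero.mpr ha0
  obtain ⟨k, rfl⟩ : ∃ k, n = 2 * k + 3 := by
    obtain ⟨j, hj⟩ := hodd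
    exact ⟨j - 1, by omega⟩
  set φ : ℤ →+* ℚ := Int.castRingHom ℚ with hφ
  have hmapsyl : (_root_.sylvester R0 (C a * X ^ 2 + C b * X + C c) (2 * k + 3) 2).map φ
      = _root_.sylvester (R0.map φ) (C (a : ℚ) * X ^ 2 + C (b : ℚ) * X + C (c : ℚ)) (2 * k + 3) 2 := by
    ext i j
    simp only [Matrix.map_apply, _root_.sylvester, Matrix.of_apply, coeff_map, qcoeff]
    split_ifs <;> simp
  have hdet : (_root_.sylvester (R0.map φ) (C (a : ℚ) * X ^ 2 + C (b : ℚ) * X + C (c : ℚ))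
      (2 * k + 3) 2).det = 1 := by
    rw [← hmapsyl, ← RingHom.mapMatrix_apply, ← RingHom.map_det]
    unfold res at hres
    rw [hres, map_one]
  have hdeg' : (R0.map φ).natDegree ≤ 2 * k + 2 + 1 :=
    le_trans natDegree_map_le (le_of_eq hdeg)
  have h2 : (_root_.sylvester (R0.map φ) (C (a : ℚ) * X ^ 2 + C (b : ℚ) * X + C (c : ℚ))
      (2 * k + 3) 2).det = (a : ℚ) ^ (2 * k + 2) * nrm (a : ℚ) (b : ℚ) (c : ℚ) (R0.map φ) :=
    key (a : ℚ) (b : ℚ) (c : ℚ) ha (2 * k + 2) (R0.map φ) hdeg'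
  rw [hdet] at h2
  set p : ℚ := ((R0.map φ) %ₘ qm (a : ℚ) (b : ℚ) (c : ℚ)).coeff 0 with hp
  set q : ℚ := ((R0.map φ) %ₘ qm (a : ℚ) (b : ℚ) (c : ℚ)).coeff 1 with hq
  have h3 : (a : ℚ) ^ (2 * k + 2) * ((a : ℚ) * p ^ 2 - (b : ℚ) * p * q + (c : ℚ) * q ^ 2)
      = 1 := h2.symm
  refine ⟨(a : ℚ) ^ k * ((2 * a * p - b * q) * b + ((b : ℚ) ^ 2 - 4 * a * c) * q) / 4,
    (a : ℚ) ^ k * ((2 * a * p - b * q) + q * b) / 4, 1, ?_, one_ne_zero, ?_⟩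
  · rintro ⟨-, -, h⟩
    exact one_ne_zero h
  · push_cast
    linear_combination (c : ℚ) * h3
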